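/- Let (B,W) be a polygonal coloring of the plane with boundary ∂ that satisfies condition (C3). Then there exists a set B' ⊆ ℝ² with B' Δ B ⊆ ∂ (a twin coloring: it has the same boundary and assigns the same colors to all points off ∂) such that there are no points X, Y, Z with dist(X,Y) = dist(Y,Z) = dist(Z,X) = 1 all lying in B' or all lying in ℝ² \ B'. -/

import Mathlib

open scoped RealInnerProductSpace

noncomputable section

/-- `l` is an (affine) line in the plane: a nonempty one-dimensional affine subspace. -/
def IsLine (l : AffineSubspace ℝ (EuclideanSpace ℝ (Fin 2))) : Prop :=
  (l : Set (EuclideanSpace ℝ (Fin 2))).Nonempty ∧ Module.finrank ℝ l.direction = 1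

/-- A boundary segment: a closed convex subset of some affine line, containing
more than one point (it may be a segment, a ray, or a full line). -/
def IsSeg (s : Set (EuclideanSpace ℝ (Fin 2))) : Prop :=
  IsClosed s ∧ Convex ℝ s ∧ s.Nontrivial ∧
    ∃ l : AffineSubspace ℝ (EuclideanSpace ℝ (Fin 2)), IsLine l ∧ s ⊆ (l : Set _)

/-- `x` is an endpoint of the segment `s`: a point of `s` not in its relative
(intrinsic) interior. -/
def IsEndpoint (x : EuclideanSpace ℝ (Fin 2)) (s : Set (EuclideanSpace ℝ (Fin 2))) : Prop :=
  x ∈ s ∧ x ∉ intrinsicInterior ℝ s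

/-- The coloring `(B, Bᶜ)` is polygonal, with set of boundary segments `S`. -/
structure IsPolygonal (B : Set (EuclideanSpace ℝ (Fin 2)))
    (S : Set (Set (EuclideanSpace ℝ (Fin 2)))) : Prop where
  /-- The black points lie in the closure of the black interior. -/
  black_sub : B ⊆ closure (interior B)
  /-- The white points lie in the closure of the white interior. -/
  white_sub : Bᶜ ⊆ closure (interior Bᶜ)
  /-- Every member of `S` is a boundary segment. -/
  seg : ∀ s ∈ S, IsSeg s
  /-- The boundary of the coloring is the union of the boundary segments. -/
  boundary : frontier B = ⋃₀ S
  /-- Two distinct boundary segments meet in at most one point. -/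
  inter_subsingleton : ∀ s ∈ S, ∀ t ∈ S, s ≠ t → (s ∩ t).Subsingleton
  /-- A common point of two distinct boundary segments is an endpoint of both. -/
  inter_endpoint : ∀ s ∈ S, ∀ t ∈ S, s ≠ t → ∀ x ∈ s ∩ t, IsEndpoint x s ∧ IsEndpoint x t
  /-- No two distinct boundary segments sharing a common point lie on a common line. -/
  no_common_line : ∀ s ∈ S, ∀ t ∈ S, s ≠ t → (s ∩ t).Nonempty →
      ¬∃ l : AffineSubspace ℝ (EuclideanSpace ℝ (Fin 2)),
        IsLine l ∧ s ⊆ (l : Set _) ∧ t ⊆ (l : Set _)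
  /-- Every bounded region meets only finitely many boundary segments. -/
  loc_finite : ∀ R : Set (EuclideanSpace ℝ (Fin 2)), Bornology.IsBounded R →
      {s ∈ S | (s ∩ R).Nonempty}.Finite

/-- Condition (C3): every monochromatic unit triangle has a vertex on the boundary. -/
def C3 (B : Set (EuclideanSpace ℝ (Fin 2))) : Prop :=
  ∀ X Y Z : EuclideanSpace ℝ (Fin 2),
    dist X Y = 1 → dist Y Z = 1 → dist Z X = 1 →
    ((X ∈ B ∧ Y ∈ B ∧ Z ∈ B) ∨ (X ∉ B ∧ Y ∉ B ∧ Z ∉ B)) →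
    X ∈ frontier B ∨ Y ∈ frontier B ∨ Z ∈ frontier B

/-- `x` is a boundary vertex: an endpoint of some boundary segment. -/
def IsVertex (S : Set (Set (EuclideanSpace ℝ (Fin 2)))) (x : EuclideanSpace ℝ (Fin 2)) : Prop :=
  ∃ s ∈ S, IsEndpoint x s

/-- A boundary point `A` is feasible if it is not a boundary vertex and the unit
circle centered at `A` contains no boundary vertex. -/
def Feasible (B : Set (EuclideanSpace ℝ (Fin 2))) (S : Set (Set (EuclideanSpace ℝ (Fin 2))))
    (A : EuclideanSpace ℝ (Fin 2)) : Prop :=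
  A ∈ frontier B ∧ ¬IsVertex S A ∧ ∀ P ∈ Metric.sphere A 1, ¬IsVertex S P

/-- Two segments are parallel: any lines containing them have the same direction. -/
def SegParallel (s t : Set (EuclideanSpace ℝ (Fin 2))) : Prop :=
  ∀ l₁ l₂ : AffineSubspace ℝ (EuclideanSpace ℝ (Fin 2)),
    IsLine l₁ → IsLine l₂ → s ⊆ (l₁ : Set _) → t ⊆ (l₂ : Set _) →
    l₁.direction = l₂.direction

end

noncomputable section

namespace Stmt10Aux

abbrev E2 := EuclideanSpace ℝ (Fin 2)

/-- the direction vector (1, θ) -/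
def dd (θ : ℝ) : E2 := (WithLp.equiv 2 (Fin 2 → ℝ)).symm ![1, θ]

@[simp] lemma dd_apply0 (θ : ℝ) : dd θ 0 = 1 := rfl
@[simp] lemma dd_apply1 (θ : ℝ) : dd θ 1 = θ := rfl

lemma norm_dd_lt_two {θ : ℝ} (h0 : 0 < θ) (h1 : θ < 1) : ‖dd θ‖ < 2 := by
  rw [EuclideanSpace.norm_eq, Real.sqrt_lt' two_pos, Fin.sum_univ_two]
  simp [Real.norm_eq_abs]
  nlinarith [sq_abs θ]

lemma continuous_dd : Continuous dd := by
  apply (PiLp.continuous_toLp 2 (fun _ : Fin 2 => ℝ)).comp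
  apply continuous_pi
  intro i
  fin_cases i <;> simp <;> continuity

lemma dd_span_inj {v : E2} {θ₁ θ₂ : ℝ} (h₁ : dd θ₁ ∈ Submodule.span ℝ {v})
    (h₂ : dd θ₂ ∈ Submodule.span ℝ {v}) : θ₁ = θ₂ := by
  rw [Submodule.mem_span_singleton] at h₁ h₂
  obtain ⟨c₁, hc₁⟩ := h₁
  obtain ⟨c₂, hc₂⟩ := h₂
  have e10 : c₁ * v 0 = 1 := by
    have : (c₁ • v) 0 = dd θ₁ 0 := by rw [hc₁]
    simpa using this
  have e11 : c₁ * v 1 = θ₁ := by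
    have : (c₁ • v) 1 = dd θ₁ 1 := by rw [hc₁]
    simpa using this
  have e20 : c₂ * v 0 = 1 := by
    have : (c₂ • v) 0 = dd θ₂ 0 := by rw [hc₂]
    simpa using this
  have e21 : c₂ * v 1 = θ₂ := by
    have : (c₂ • v) 1 = dd θ₂ 1 := by rw [hc₂]
    simpa using this
  have hv0 : v 0 ≠ 0 := by
    intro h
    rw [h, mul_zero] at e10
    norm_num at e10
  have hcc : c₁ = c₂ := mul_right_cancel₀ hv0 (by rw [e10, e20])
  rw [← e11, ← e21, hcc]

/-- The thin sector just counterclockwise of direction (1,0) at `P` is eventually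
inside `U`. -/
def Near (U : Set E2) (P : E2) : Prop :=
  ∃ θ₀ > 0, ∀ θ ∈ Set.Ioo (0:ℝ) θ₀, ∃ ε₀ > 0, ∀ ε ∈ Set.Ioo (0:ℝ) ε₀, P + ε • dd θ ∈ U

lemma near_of_open {U : Set E2} (hU : IsOpen U) {P : E2} (hP : P ∈ U) : Near U P := by
  obtain ⟨δ, hδ0, hδ⟩ := Metric.isOpen_iff.1 hU P hP
  refine ⟨1, one_pos, fun θ hθ => ⟨δ / 2, by positivity, fun ε hε => hδ ?_⟩⟩
  rw [Metric.mem_ball, dist_eq_norm, add_sub_cancel_left, norm_smul, Real.norm_eq_abs,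
    abs_of_pos hε.1]
  nlinarith [norm_dd_lt_two hθ.1 hθ.2, hε.1, hε.2, norm_nonneg (dd θ)]

lemma half_min_mem {a b : ℝ} (ha : 0 < a) (hb : 0 < b) :
    min a b / 2 ∈ Set.Ioo 0 a ∧ min a b / 2 ∈ Set.Ioo 0 b := by
  have h := half_lt_self (lt_min ha hb)
  have h0 : 0 < min a b / 2 := by positivity
  exact ⟨⟨h0, lt_of_lt_of_le h (min_le_left _ _)⟩, ⟨h0, lt_of_lt_of_le h (min_le_right _ _)⟩⟩

lemma not_near_both {U V : Set E2} (hdisj : Disjoint U V) {P : E2}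
    (hU : Near U P) (hV : Near V P) : False := by
  obtain ⟨θ₁, hθ₁, h1⟩ := hU
  obtain ⟨θ₂, hθ₂, h2⟩ := hV
  have hθ := half_min_mem hθ₁ hθ₂
  obtain ⟨ε₁, hε₁, g1⟩ := h1 _ hθ.1
  obtain ⟨ε₂, hε₂, g2⟩ := h2 _ hθ.2
  have hε := half_min_mem hε₁ hε₂
  exact Set.disjoint_left.1 hdisj (g1 _ hε.1) (g2 _ hε.2)

lemma not_frontier_mem {B : Set E2} {x : E2} (h : x ∉ frontier B) :
    x ∈ interior B ∪ interior Bᶜ := by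
  by_cases hx : x ∈ interior B
  · exact Or.inl hx
  · right
    rw [interior_compl, Set.mem_compl_iff]
    intro hc
    exact h (by rw [← closure_diff_interior]; exact ⟨hc, hx⟩)

lemma disj_int : ∀ B : Set E2, Disjoint (interior B) (interior Bᶜ) := fun B =>
  Set.disjoint_left.2 fun _ hx hx' => (interior_subset hx' : _ ∈ Bᶜ) (interior_subset hx)


lemma exists_pos_lb {α : Type*} {F : Set α} (hF : F.Finite) (f : ∀ s, s ∈ F → ℝ)
    (hf : ∀ s hs, 0 < f s hs) : ∃ c, 0 < c ∧ ∀ s (hs : s ∈ F), c ≤ f s hs := by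
  haveI := hF.fintype
  rcases isEmpty_or_nonempty F with h | h
  · exact ⟨1, one_pos, fun s hs => (h.false ⟨s, hs⟩).elim⟩
  · obtain ⟨x, -, hx⟩ := Finset.exists_min_image Finset.univ (fun x : F => f x x.2)
      Finset.univ_nonempty
    exact ⟨f x x.2, hf _ _, fun s hs => hx ⟨s, hs⟩ (Finset.mem_univ _)⟩

lemma half_min3_mem {a b c : ℝ} (ha : 0 < a) (hb : 0 < b) (hc : 0 < c) :
    min a (min b c) / 2 ∈ Set.Ioo 0 a ∧ min a (min b c) / 2 ∈ Set.Ioo 0 b ∧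
      min a (min b c) / 2 ∈ Set.Ioo 0 c := by
  have h0 : 0 < min a (min b c) := lt_min ha (lt_min hb hc)
  have h := half_lt_self h0
  exact ⟨⟨half_pos h0, h.trans_le (min_le_left _ _)⟩,
    ⟨half_pos h0, h.trans_le ((min_le_right _ _).trans (min_le_left _ _))⟩,
    ⟨half_pos h0, h.trans_le ((min_le_right _ _).trans (min_le_right _ _))⟩⟩

lemma common_translate {U : Set E2} {X Y Z : E2} (hX : Near U X) (hY : Near U Y)
    (hZ : Near U Z) : ∃ v : E2, X + v ∈ U ∧ Y + v ∈ U ∧ Z + v ∈ U := by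
  obtain ⟨θ₁, h1, g1⟩ := hX
  obtain ⟨θ₂, h2, g2⟩ := hY
  obtain ⟨θ₃, h3, g3⟩ := hZ
  obtain ⟨m1, m2, m3⟩ := half_min3_mem h1 h2 h3
  obtain ⟨ε₁, he1, k1⟩ := g1 _ m1
  obtain ⟨ε₂, he2, k2⟩ := g2 _ m2
  obtain ⟨ε₃, he3, k3⟩ := g3 _ m3
  obtain ⟨n1, n2, n3⟩ := half_min3_mem he1 he2 he3
  exact ⟨_, k1 _ n1, k2 _ n2, k3 _ n3⟩

lemma dichotomy {B : Set E2} {S : Set (Set E2)} (hpoly : IsPolygonal B S) (P : E2) :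
    Near (interior B) P ∨ Near (interior Bᶜ) P := by
  by_cases hPf : P ∈ frontier B
  case neg =>
    rcases not_frontier_mem hPf with h | h
    · exact Or.inl (near_of_open isOpen_interior h)
    · exact Or.inr (near_of_open isOpen_interior h)
  case pos =>
  have hF : {s ∈ S | (s ∩ Metric.ball P 1).Nonempty}.Finite :=
    hpoly.loc_finite _ Metric.isBounded_ball
  set F := {s ∈ S | (s ∩ Metric.ball P 1).Nonempty} with hFdef
  have hG : {s ∈ F | P ∉ s}.Finite := hF.subset (Set.sep_subset _ _)
  have hUopen : IsOpen (Metric.ball P 1 ∩ ⋂ s ∈ {s ∈ F | P ∉ s}, sᶜ) :=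
    Metric.isOpen_ball.inter (hG.isOpen_biInter fun s hs => (hpoly.seg s hs.1.1).1.isOpen_compl)
  have hPU : P ∈ Metric.ball P 1 ∩ ⋂ s ∈ {s ∈ F | P ∉ s}, sᶜ :=
    ⟨Metric.mem_ball_self one_pos, Set.mem_biInter fun s hs => hs.2⟩
  obtain ⟨r, hr0, hball⟩ := Metric.isOpen_iff.1 hUopen P hPU
  set F' := {s ∈ F | P ∈ s} with hF'def
  have hF'fin : F'.Finite := hF.subset (Set.sep_subset _ _)
  have key : ∀ p ∈ Metric.ball P r, p ∈ frontier B → ∃ s, s ∈ F' ∧ p ∈ s := by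
    intro p hp hpf
    rw [hpoly.boundary] at hpf
    obtain ⟨s, hsS, hps⟩ := hpf
    have hpU := hball hp
    have hsF : s ∈ F := ⟨hsS, ⟨p, hps, hpU.1⟩⟩
    by_cases hPs : P ∈ s
    · exact ⟨s, ⟨hsF, hPs⟩, hps⟩
    · exact absurd hps (Set.mem_iInter₂.1 hpU.2 s ⟨hsF, hPs⟩)
  have hq : ∀ s, s ∈ F' → ∃ x, x ∈ s ∧ x ≠ P := by
    intro s hs
    obtain ⟨a, ha, b, hb, hab⟩ := (hpoly.seg s hs.1.1).2.2.1
    by_cases hA : a = P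
    · exact ⟨b, hb, fun hB => hab (by rw [hA, hB])⟩
    · exact ⟨a, ha, hA⟩
  choose q hqmem hqne using hq
  have hcol : ∀ s (hs : s ∈ F'), ∀ p ∈ s, p - P ∈ Submodule.span ℝ {q s hs - P} := by
    intro s hs p hp
    obtain ⟨-, -, -, l, ⟨-, hldim⟩, hsl⟩ := hpoly.seg s hs.1.1
    have h1 : q s hs - P ∈ l.direction := by
      simpa [vsub_eq_sub] using AffineSubspace.vsub_mem_direction (hsl (hqmem s hs)) (hsl hs.2)
    have h2 : p - P ∈ l.direction := by
      simpa [vsub_eq_sub] using AffineSubspace.vsub_mem_direction (hsl hp) (hsl hs.2)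
    have hspan : Submodule.span ℝ {q s hs - P} = l.direction := by
      apply Submodule.eq_of_le_of_finrank_le
      · rw [Submodule.span_le, Set.singleton_subset_iff]; exact h1
      · rw [hldim, finrank_span_singleton (sub_ne_zero.2 (hqne s hs))]
    rw [hspan]; exact h2
  have hav : ∀ s (hs : s ∈ F'), ∃ θ₀, 0 < θ₀ ∧ ∀ θ ∈ Set.Ioo (0:ℝ) θ₀,
      dd θ ∉ Submodule.span ℝ {q s hs - P} := by
    intro s hs
    by_cases h : ∃ θb, 0 < θb ∧ dd θb ∈ Submodule.span ℝ {q s hs - P}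
    · obtain ⟨θb, hθb, hmem⟩ := h
      exact ⟨θb, hθb, fun θ hθ hcon => absurd (dd_span_inj hcon hmem) (ne_of_lt hθ.2)⟩
    · exact ⟨1, one_pos, fun θ hθ hcon => h ⟨θ, hθ.1, hcon⟩⟩
  choose θf hθf0 hθfav using hav
  obtain ⟨c, hc0, hcle⟩ := exists_pos_lb hF'fin θf hθf0
  have hθc0 : 0 < min c 1 := lt_min hc0 one_pos
  set W : Set (ℝ × ℝ) := Set.Ioo (0:ℝ) (r/2) ×ˢ Set.Ioo (0:ℝ) (min c 1) with hWdef
  set f : ℝ × ℝ → E2 := fun p => P + p.1 • dd p.2 with hfdef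
  have hWpre : IsPreconnected W := ((convex_Ioo _ _).prod (convex_Ioo _ _)).isPreconnected
  have hfc : Continuous f :=
    continuous_const.add (continuous_fst.smul (continuous_dd.comp continuous_snd))
  have hKpre : IsPreconnected (f '' W) := hWpre.image f hfc.continuousOn
  have hKfr : ∀ x ∈ f '' W, x ∉ frontier B := by
    rintro x ⟨⟨ε, θ⟩, ⟨hε, hθ⟩, rfl⟩ hxf
    have hθ1 : θ < 1 := lt_of_lt_of_le hθ.2 (min_le_right _ _)
    have hxball : f (ε, θ) ∈ Metric.ball P r := by
      rw [Metric.mem_ball, dist_eq_norm]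
      have he : f (ε, θ) - P = ε • dd θ := by
        simp only [hfdef]
        exact add_sub_cancel_left P _
      rw [he, norm_smul, Real.norm_eq_abs, abs_of_pos hε.1]
      nlinarith [norm_dd_lt_two hθ.1 hθ1, hε.1, hε.2, norm_nonneg (dd θ)]
    obtain ⟨s, hs, hps⟩ := key _ hxball hxf
    have hsub := hcol s hs _ hps
    have hsm : ε • dd θ ∈ Submodule.span ℝ {q s hs - P} := by
      have he : f (ε, θ) - P = ε • dd θ := by
        simp only [hfdef]
        exact add_sub_cancel_left P _
      rwa [he] at hsub
    have hdd : dd θ ∈ Submodule.span ℝ {q s hs - P} := by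
      have h' := Submodule.smul_mem _ ε⁻¹ hsm
      rwa [smul_smul, inv_mul_cancel₀ (ne_of_gt hε.1), one_smul] at h'
    exact hθfav s hs θ ⟨hθ.1, lt_of_lt_of_le hθ.2 ((min_le_left _ _).trans (hcle s hs))⟩ hdd
  have hKsub : f '' W ⊆ interior B ∪ interior Bᶜ := fun x hx => not_frontier_mem (hKfr x hx)
  rcases hKpre.subset_or_subset isOpen_interior isOpen_interior (disj_int B) hKsub with hK | hK
  · exact Or.inl ⟨min c 1, hθc0, fun θ hθ => ⟨r/2, by positivity, fun ε hε =>
      hK ⟨(ε, θ), ⟨hε, hθ⟩, rfl⟩⟩⟩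
  · exact Or.inr ⟨min c 1, hθc0, fun θ hθ => ⟨r/2, by positivity, fun ε hε =>
      hK ⟨(ε, θ), ⟨hε, hθ⟩, rfl⟩⟩⟩

end Stmt10Aux

theorem stmt10 (B : Set (EuclideanSpace ℝ (Fin 2))) (S : Set (Set (EuclideanSpace ℝ (Fin 2))))
    (hpoly : IsPolygonal B S) (hC3 : C3 B) :
    ∃ B' : Set (EuclideanSpace ℝ (Fin 2)), symmDiff B' B ⊆ frontier B ∧
      ¬∃ X Y Z : EuclideanSpace ℝ (Fin 2),
        ((X ∈ B' ∧ Y ∈ B' ∧ Z ∈ B') ∨ (X ∉ B' ∧ Y ∉ B' ∧ Z ∉ B')) ∧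
        dist X Y = 1 ∧ dist Y Z = 1 ∧ dist Z X = 1 := by
  classical
  refine ⟨{P | Stmt10Aux.Near (interior B) P}, ?_, ?_⟩
  · intro x hx
    rw [Set.mem_symmDiff] at hx
    by_contra hxf
    rcases Stmt10Aux.not_frontier_mem hxf with hxi | hxi
    · have h1 : Stmt10Aux.Near (interior B) x := Stmt10Aux.near_of_open isOpen_interior hxi
      have h2 : x ∈ B := interior_subset hxi
      rcases hx with ⟨-, h⟩ | ⟨-, h⟩
      · exact h h2
      · exact h h1
    · have h1 : Stmt10Aux.Near (interior Bᶜ) x := Stmt10Aux.near_of_open isOpen_interior hxi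
      have h2 : x ∈ Bᶜ := interior_subset hxi
      rcases hx with ⟨h, -⟩ | ⟨h, -⟩
      · exact Stmt10Aux.not_near_both (Stmt10Aux.disj_int B) h h1
      · exact h2 h
  · rintro ⟨X, Y, Z, hmono, hXY, hYZ, hZX⟩
    rcases hmono with ⟨hX, hY, hZ⟩ | ⟨hX, hY, hZ⟩
    · obtain ⟨v, hXv, hYv, hZv⟩ := Stmt10Aux.common_translate hX hY hZ
      rcases hC3 (X + v) (Y + v) (Z + v) (by rwa [dist_add_right]) (by rwa [dist_add_right])
        (by rwa [dist_add_right])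
        (Or.inl ⟨interior_subset hXv, interior_subset hYv, interior_subset hZv⟩) with h | h | h
      · rw [← closure_diff_interior] at h; exact h.2 hXv
      · rw [← closure_diff_interior] at h; exact h.2 hYv
      · rw [← closure_diff_interior] at h; exact h.2 hZv
    · have hX' := (Stmt10Aux.dichotomy hpoly X).resolve_left hX
      have hY' := (Stmt10Aux.dichotomy hpoly Y).resolve_left hY
      have hZ' := (Stmt10Aux.dichotomy hpoly Z).resolve_left hZ
      obtain ⟨v, hXv, hYv, hZv⟩ := Stmt10Aux.common_translate hX' hY' hZ'
      rcases hC3 (X + v) (Y + v) (Z + v) (by rwa [dist_add_right]) (by rwa [dist_add_right])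
        (by rwa [dist_add_right])
        (Or.inr ⟨interior_subset hXv, interior_subset hYv, interior_subset hZv⟩) with h | h | h
      · rw [← frontier_compl, ← closure_diff_interior] at h; exact h.2 hXv
      · rw [← frontier_compl, ← closure_diff_interior] at h; exact h.2 hYv
      · rw [← frontier_compl, ← closure_diff_interior] at h; exact h.2 hZv

end
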